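/- arXiv:1605.07101 — 2 statements merged into one kernel-verified Lean document; each statement's English description precedes it below -/
import Mathlib

section
/- Let ω be a free ultrafilter on ℕ, let (n_k) be a sequence of positive integers with n_k → ∞, and let (c_i)_{i ∈ ℕ*} be a sequence of real numbers. Then there exists a sequence of permutations p_k of {1,…,n_k} such that for every i ∈ ℕ*, cyc_i(p_k) converges to c_i along ω, if and only if c_i ≥ 0 for every i ∈ ℕ* and ∑_{i ∈ ℕ*} c_i ≤ 1. -/
open Filter

section Helpers
open Function

lemma minimalPeriod_of_semiconj {α β : Type*} {f : α → α} {g : β → β} {h : α → β}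
    (hinj : Function.Injective h) (hs : Function.Semiconj h f g) (x : α) :
    Function.minimalPeriod g (h x) = Function.minimalPeriod f x := by
  rw [Function.minimalPeriod_eq_minimalPeriod_iff]
  intro m
  unfold Function.IsPeriodicPt Function.IsFixedPt
  rw [← (hs.iterate_right m).eq x]
  exact ⟨fun e => hinj e, fun e => congrArg h e⟩

open Fin.NatCast in
lemma finRotate_iterate (m : ℕ) (x : Fin (m+1)) (t : ℕ) :
    (finRotate (m+1))^[t] x = x + (t : Fin (m+1)) := by
  induction t with
  | zero => simp
  | succ t ih =>
    rw [Function.iterate_succ_apply', ih, finRotate_succ_apply]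
    push_cast
    exact add_assoc _ _ _

open Fin.NatCast in
lemma minimalPeriod_finRotate (m : ℕ) (x : Fin (m+1)) :
    Function.minimalPeriod (finRotate (m+1)) x = m + 1 := by
  have key : ∀ t : ℕ, Function.IsPeriodicPt (finRotate (m+1)) t x ↔ (m+1) ∣ t := by
    intro t
    unfold Function.IsPeriodicPt Function.IsFixedPt
    rw [finRotate_iterate, add_eq_left, Fin.natCast_eq_zero]
  have h1 : Function.IsPeriodicPt (finRotate (m+1)) (m+1) x := (key _).2 dvd_rfl
  refine Nat.dvd_antisymm (h1.minimalPeriod_dvd) ?_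
  exact ((key _).1 (Function.isPeriodicPt_minimalPeriod _ _))

lemma minimalPeriod_finRotate' (r : ℕ) (y : Fin r) :
    Function.minimalPeriod (finRotate r) y = r := by
  cases r with
  | zero => exact y.elim0
  | succ r' => exact minimalPeriod_finRotate r' y

lemma exists_perm_count (M r : ℕ) (b : ℕ → ℕ) (N : ℕ)
    (hN : (∑ i ∈ Finset.range M, (i+1) * b (i+1)) + r = N) :
    ∃ p : Equiv.Perm (Fin N), ∀ t : ℕ,
      (Finset.univ.filter fun x : Fin N => Function.minimalPeriod (⇑p) x = t).card
        = (if t ∈ Finset.Icc 1 M then t * b t else 0) + (if t = r then r else 0) := by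
  classical
  set α := ((i : Fin M) × (Fin (b (i+1:ℕ)) × Fin ((i:ℕ)+1))) ⊕ Fin r with hα
  have hcard : Fintype.card α = N := by
    simp only [hα, Fintype.card_sum, Fintype.card_sigma, Fintype.card_prod, Fintype.card_fin]
    rw [Fin.sum_univ_eq_sum_range (fun i => b (i+1) * (i+1))]
    rw [← hN]
    congr 1
    exact Finset.sum_congr rfl fun i _ => Nat.mul_comm _ _
  set q : Equiv.Perm α :=
    Equiv.sumCongr
      (Equiv.sigmaCongrRight fun i => Equiv.prodCongr (Equiv.refl (Fin (b ((i:ℕ)+1)))) (finRotate ((i:ℕ)+1)))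
      (finRotate r) with hq
  have hlen : ∀ z : α, Function.minimalPeriod (⇑q) z
      = Sum.elim (fun s : (i : Fin M) × (Fin (b (i+1:ℕ)) × Fin ((i:ℕ)+1)) => (s.1:ℕ)+1)
          (fun _ => r) z := by
    rintro (⟨i, j, x⟩ | y)
    · have hs : Function.Semiconj (fun x : Fin ((i:ℕ)+1) => (Sum.inl ⟨i, (j, x)⟩ : α))
          (finRotate ((i:ℕ)+1)) (⇑q) := by
        intro x
        rfl
      have hinj : Function.Injective (fun x : Fin ((i:ℕ)+1) => (Sum.inl ⟨i, (j, x)⟩ : α)) := by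
        intro x y hxy
        simpa using hxy
      have := minimalPeriod_of_semiconj hinj hs x
      simp only [Sum.elim_inl]
      rw [this, minimalPeriod_finRotate]
    · have hs : Function.Semiconj (fun y : Fin r => (Sum.inr y : α)) (finRotate r) (⇑q) := by
        intro y; rfl
      have hinj : Function.Injective (fun y : Fin r => (Sum.inr y : α)) := by
        intro x y hxy; simpa using hxy
      have := minimalPeriod_of_semiconj hinj hs y
      simp only [Sum.elim_inr]
      rw [this, minimalPeriod_finRotate']
  set e : α ≃ Fin N := Fintype.equivFinOfCardEq hcard with he
  refine ⟨e.permCongr q, fun t => ?_⟩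
  have hmin : ∀ z : α, Function.minimalPeriod (⇑(e.permCongr q)) (e z)
      = Function.minimalPeriod (⇑q) z := by
    intro z
    refine minimalPeriod_of_semiconj e.injective ?_ z
    intro w
    simp
  have himg : (Finset.univ.filter fun x : Fin N => Function.minimalPeriod (⇑(e.permCongr q)) x = t)
      = Finset.image e (Finset.univ.filter fun z : α => Function.minimalPeriod (⇑q) z = t) := by
    ext w
    simp only [Finset.mem_filter, Finset.mem_image, Finset.mem_univ, true_and]
    constructor
    · intro hw
      exact ⟨e.symm w, by rw [← hmin (e.symm w), e.apply_symm_apply]; exact hw,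
        e.apply_symm_apply w⟩
    · rintro ⟨z, hz, rfl⟩
      rw [hmin]; exact hz
  rw [himg, Finset.card_image_of_injective _ e.injective]
  have : (Finset.univ.filter fun z : α => Function.minimalPeriod (⇑q) z = t)
      = (Finset.univ.filter fun z : α =>
          Sum.elim (fun s : (i : Fin M) × (Fin (b (i+1:ℕ)) × Fin ((i:ℕ)+1)) => (s.1:ℕ)+1)
            (fun _ => r) z = t) := by
    ext z
    simp [hlen z]
  rw [this, Finset.card_filter]
  rw [Fintype.sum_sum_type]
  simp only [Sum.elim_inl, Sum.elim_inr]
  have hright : (∑ _y : Fin r, if r = t then 1 else 0) = if t = r then r else 0 := by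
    by_cases h : r = t <;> simp [h, eq_comm]
  have hleft : (∑ s : (i : Fin M) × (Fin (b (i+1:ℕ)) × Fin ((i:ℕ)+1)),
      if (s.1:ℕ)+1 = t then 1 else 0)
      = if t ∈ Finset.Icc 1 M then t * b t else 0 := by
    rw [← Finset.univ_sigma_univ, Finset.sum_sigma]
    have hinner : ∀ i : Fin M,
        (∑ _jx : Fin (b ((i:ℕ)+1)) × Fin ((i:ℕ)+1), if (i:ℕ)+1 = t then 1 else 0)
          = if (i:ℕ)+1 = t then b ((i:ℕ)+1) * ((i:ℕ)+1) else 0 := by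
      intro i
      rw [Finset.sum_const, Finset.card_univ, Fintype.card_prod, Fintype.card_fin,
        Fintype.card_fin, smul_eq_mul]
      by_cases h : (i:ℕ)+1 = t <;> simp [h]
    rw [Finset.sum_congr rfl fun i _ => hinner i]
    rw [Fin.sum_univ_eq_sum_range (fun i => if i+1 = t then b (i+1) * (i+1) else 0)]
    cases t with
    | zero => simp
    | succ t' =>
      have h2 : ∀ i, (if i+1 = t'+1 then b (i+1) * (i+1) else 0)
          = if i = t' then b (i+1) * (i+1) else 0 := by
        intro i; simp [Nat.succ_inj]
      rw [Finset.sum_congr rfl fun i _ => h2 i, Finset.sum_ite_eq' (Finset.range M) t'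
        (fun i => b (i+1) * (i+1))]
      simp only [Finset.mem_range, Finset.mem_Icc]
      by_cases h : t' < M
      · rw [if_pos h, if_pos ⟨Nat.succ_le_succ (Nat.zero_le _), h⟩, Nat.mul_comm]
      · rw [if_neg h, if_neg fun hc => h (Nat.lt_of_succ_le hc.2)]
  exact congrArg₂ (· + ·) hleft hright

end Helpers

/-- `cyc i p` : the number of points lying in cycles of length `i` of `p`, divided by `n`. -/
noncomputable def cyc {n : ℕ} (p : Equiv.Perm (Fin n)) (i : ℕ) : ℝ :=
  ((Finset.univ.filter fun x : Fin n => Function.minimalPeriod (⇑p) x = i).card : ℝ) / n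

/-- Let `ω` be a free ultrafilter on `ℕ`, `(n k)` positive integers with
`n k → ∞`, and `(c i)_{i ∈ ℕ*}` real numbers. There is a sequence of permutations `p k` of
`{1, …, n k}` with `cyc_i (p k) → c i` along `ω` for every `i ∈ ℕ*` iff `c i ≥ 0` for all
`i ∈ ℕ*` and `∑_{i ∈ ℕ*} c i ≤ 1` (expressed via all finite partial sums). -/
theorem exists_permutation_sequence_with_cycles (ω : Ultrafilter ℕ)
    (hω : (ω : Filter ℕ) ≤ Filter.cofinite)
    (n : ℕ → ℕ) (hn : ∀ k, 0 < n k) (hn' : Tendsto n atTop atTop)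
    (c : ℕ → ℝ) :
    (∃ p : ∀ k, Equiv.Perm (Fin (n k)),
        ∀ i : ℕ, 0 < i →
          Tendsto (fun k => cyc (p k) i) (ω : Filter ℕ) (nhds (c i))) ↔
      (∀ i : ℕ, 0 < i → 0 ≤ c i) ∧ (∀ N : ℕ, ∑ i ∈ Finset.Icc 1 N, c i ≤ 1) := by
  constructor
  · rintro ⟨p, hp⟩
    constructor
    · intro i hi
      refine ge_of_tendsto (hp i hi) (Filter.Eventually.of_forall fun k => ?_)
      unfold cyc
      positivity
    · intro N
      have hsum : ∀ k, ∑ i ∈ Finset.Icc 1 N, cyc (p k) i ≤ 1 := by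
        intro k
        unfold cyc
        rw [← Finset.sum_div]
        rw [div_le_one (by exact_mod_cast hn k)]
        have hcard : ∑ i ∈ Finset.Icc 1 N,
            ((Finset.univ.filter fun x : Fin (n k) =>
              Function.minimalPeriod (⇑(p k)) x = i).card) ≤ n k := by
          rw [← Finset.card_biUnion]
          · calc _ ≤ (Finset.univ : Finset (Fin (n k))).card :=
                  Finset.card_le_card (Finset.subset_univ _)
              _ = n k := by simp
          · intro a _ b _ hab
            simp only [Finset.disjoint_left, Finset.mem_filter]
            rintro x ⟨_, hxa⟩ ⟨_, hxb⟩
            exact hab (hxa ▸ hxb ▸ rfl)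
        exact_mod_cast hcard
      have htend : Tendsto (fun k => ∑ i ∈ Finset.Icc 1 N, cyc (p k) i) (ω : Filter ℕ)
          (nhds (∑ i ∈ Finset.Icc 1 N, c i)) := by
        refine tendsto_finset_sum _ fun i hi => hp i ?_
        exact (Finset.mem_Icc.1 hi).1
      exact le_of_tendsto htend (Filter.Eventually.of_forall hsum)
  · rintro ⟨hc0, hcsum⟩
    set b : ℕ → ℕ → ℕ := fun k i => ⌊c i * (n k : ℝ) / i⌋₊ with hb
    have hSle : ∀ k, (∑ i ∈ Finset.range k, (i+1) * b k (i+1)) ≤ n k := by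
      intro k
      have hreal : ((∑ i ∈ Finset.range k, (i+1) * b k (i+1) : ℕ) : ℝ) ≤ (n k : ℝ) := by
        push_cast
        calc ∑ i ∈ Finset.range k, ((i:ℝ)+1) * (b k (i+1) : ℝ)
            ≤ ∑ i ∈ Finset.range k, c (i+1) * (n k : ℝ) := by
              refine Finset.sum_le_sum fun i _ => ?_
              have hci : 0 ≤ c (i+1) := hc0 (i+1) (Nat.succ_pos i)
              have hfl : (b k (i+1) : ℝ) ≤ c (i+1) * (n k : ℝ) / ((i:ℝ)+1) := by
                rw [hb]
                push_cast
                exact Nat.floor_le (by positivity)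
              calc ((i:ℝ)+1) * (b k (i+1) : ℝ)
                  ≤ ((i:ℝ)+1) * (c (i+1) * (n k : ℝ) / ((i:ℝ)+1)) := by
                    exact mul_le_mul_of_nonneg_left hfl (by positivity)
                _ = c (i+1) * (n k : ℝ) := by field_simp
          _ = (∑ i ∈ Finset.range k, c (i+1)) * (n k : ℝ) := by rw [Finset.sum_mul]
          _ ≤ 1 * (n k : ℝ) := by
              refine mul_le_mul_of_nonneg_right ?_ (by positivity)
              have := hcsum k
              rwa [show Finset.Icc 1 k = Finset.map ⟨fun i => i+1, fun a b h => by simpa using h⟩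
                (Finset.range k) from ?_, Finset.sum_map] at this
              ext x
              simp only [Finset.mem_Icc, Finset.mem_map, Finset.mem_range,
                Function.Embedding.coeFn_mk]
              constructor
              · rintro ⟨h1, h2⟩; exact ⟨x - 1, by omega, by show x - 1 + 1 = x; omega⟩
              · rintro ⟨y, hy, rfl⟩; show 1 ≤ y + 1 ∧ y + 1 ≤ k; omega
          _ = (n k : ℝ) := one_mul _
      exact_mod_cast hreal
    have hex : ∀ k, ∃ p : Equiv.Perm (Fin (n k)), ∀ t : ℕ,
        (Finset.univ.filter fun x : Fin (n k) => Function.minimalPeriod (⇑p) x = t).card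
          = (if t ∈ Finset.Icc 1 k then t * b k t else 0)
            + (if t = n k - (∑ i ∈ Finset.range k, (i+1) * b k (i+1)) then
                n k - (∑ i ∈ Finset.range k, (i+1) * b k (i+1)) else 0) := by
      intro k
      exact exists_perm_count k _ (b k) (n k) (Nat.add_sub_cancel' (hSle k))
    choose p hp using hex
    refine ⟨p, fun i hi => ?_⟩
    have hcof : (ω : Filter ℕ) ≤ atTop := by rwa [← Nat.cofinite_eq_atTop]
    refine Tendsto.mono_left ?_ hcof
    -- squeeze
    have hzero : Tendsto (fun k => (i : ℝ) / (n k : ℝ)) atTop (nhds 0) :=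
      (tendsto_const_div_atTop_nhds_zero_nat (i : ℝ)).comp hn'
    have hlow : Tendsto (fun k => c i - (i : ℝ) / (n k : ℝ)) atTop (nhds (c i)) := by
      simpa using (tendsto_const_nhds (x := c i)).sub hzero
    have hhigh : Tendsto (fun k => c i + (i : ℝ) / (n k : ℝ)) atTop (nhds (c i)) := by
      simpa using (tendsto_const_nhds (x := c i)).add hzero
    refine tendsto_of_tendsto_of_tendsto_of_le_of_le' hlow hhigh ?_ ?_
    · -- lower bound eventually
      filter_upwards [Filter.eventually_ge_atTop i] with k hk
      have hnk : (0:ℝ) < (n k : ℝ) := by exact_mod_cast hn k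
      have hval : cyc (p k) i = (((if i ∈ Finset.Icc 1 k then i * b k i else 0)
          + (if i = n k - (∑ j ∈ Finset.range k, (j+1) * b k (j+1)) then
              n k - (∑ j ∈ Finset.range k, (j+1) * b k (j+1)) else 0) : ℕ) : ℝ) / (n k : ℝ) := by
        unfold cyc
        rw [hp k i]
      rw [hval]
      have heq : c i - (i:ℝ)/(n k : ℝ) = (c i * (n k : ℝ) - i)/(n k : ℝ) := by field_simp
      rw [heq]
      gcongr
      push_cast
      rw [if_pos (Finset.mem_Icc.2 ⟨hi, hk⟩)]
      have hipos : (0:ℝ) < (i:ℝ) := by exact_mod_cast hi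
      have h1 : c i * (n k:ℝ) / (i:ℝ) < (b k i : ℝ) + 1 := by
        rw [hb]; push_cast; exact Nat.lt_floor_add_one _
      have hfloor : c i * (n k:ℝ) < (i:ℝ) * ((b k i : ℝ) + 1) := by
        calc c i * (n k:ℝ) = (c i * (n k:ℝ) / (i:ℝ)) * (i:ℝ) := by field_simp
          _ < ((b k i:ℝ)+1) * (i:ℝ) := mul_lt_mul_of_pos_right h1 hipos
          _ = (i:ℝ) * ((b k i:ℝ)+1) := mul_comm _ _
      have hite2 : (0:ℝ) ≤ (if i = n k - (∑ j ∈ Finset.range k, (j+1) * b k (j+1)) then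
          ((n k - (∑ j ∈ Finset.range k, (j+1) * b k (j+1)) : ℕ) : ℝ) else 0) := by
        by_cases h : i = n k - (∑ j ∈ Finset.range k, (j+1) * b k (j+1)) <;> simp [h]
      linarith
    · filter_upwards [Filter.eventually_ge_atTop i] with k hk
      have hnk : (0:ℝ) < (n k : ℝ) := by exact_mod_cast hn k
      have hval : cyc (p k) i = (((if i ∈ Finset.Icc 1 k then i * b k i else 0)
          + (if i = n k - (∑ j ∈ Finset.range k, (j+1) * b k (j+1)) then
              n k - (∑ j ∈ Finset.range k, (j+1) * b k (j+1)) else 0) : ℕ) : ℝ) / (n k : ℝ) := by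
        unfold cyc
        rw [hp k i]
      rw [hval]
      have heq : c i + (i:ℝ)/(n k : ℝ) = (c i * (n k : ℝ) + i)/(n k : ℝ) := by field_simp
      rw [heq]
      gcongr
      push_cast
      rw [if_pos (Finset.mem_Icc.2 ⟨hi, hk⟩)]
      have hipos : (0:ℝ) < (i:ℝ) := by exact_mod_cast hi
      have hci : 0 ≤ c i := hc0 i hi
      have hfl : (b k i : ℝ) ≤ c i * (n k : ℝ) / (i:ℝ) := by
        rw [hb]; push_cast; exact Nat.floor_le (by positivity)
      have h1 : (i:ℝ) * (b k i : ℝ) ≤ c i * (n k:ℝ) := by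
        calc (i:ℝ) * (b k i : ℝ) ≤ (i:ℝ) * (c i * (n k : ℝ) / (i:ℝ)) :=
              mul_le_mul_of_nonneg_left hfl (le_of_lt hipos)
          _ = c i * (n k:ℝ) := by field_simp
      have hite2 : (if i = n k - (∑ j ∈ Finset.range k, (j+1) * b k (j+1)) then
          ((n k - (∑ j ∈ Finset.range k, (j+1) * b k (j+1)) : ℕ) : ℝ) else 0) ≤ (i:ℝ) := by
        by_cases h : i = n k - (∑ j ∈ Finset.range k, (j+1) * b k (j+1))
        · rw [if_pos h, ← h]
        · rw [if_neg h]; positivity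
      linarith
end

section
/- For i ∈ ℕ*, let λ_i = (1/i)∑_{ζ^i = 1} δ_ζ be the uniform probability measure on the i-th roots of unity in the unit circle S¹, and let λ_∞ be the normalized Haar (Lebesgue) probability measure on S¹. Let (μ_j) be a sequence of finite convex combinations of measures from the set {λ_i : i ∈ ℕ*} ∪ {λ_∞}, and let μ be a Borel probability measure on S¹ such that μ_j(A) → μ(A) as j → ∞ for every Borel set A ⊆ S¹. Then there exist nonnegative reals (c_i)_{i ∈ ℕ*} and c_∞ with c_∞ + ∑_{i ∈ ℕ*} c_i = 1 such that μ = c_∞·λ_∞ + ∑_{i ∈ ℕ*} c_i·λ_i. -/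
open MeasureTheory Filter

/-- `λᵢ = (1/i) ∑_{ζ^i = 1} δ_ζ`, the uniform probability measure on the `i`-th roots of
unity (a Borel measure on `ℂ` supported on the unit circle `S¹`). -/
noncomputable def rootMeasure (i : ℕ) : Measure ℂ :=
  (i : ENNReal)⁻¹ • ∑ ζ ∈ (Polynomial.nthRoots i (1 : ℂ)).toFinset, Measure.dirac ζ

lemma rootFinset_eq (i : ℕ) :
    (Polynomial.nthRoots i (1 : ℂ)).toFinset = Polynomial.nthRootsFinset i (1 : ℂ) := by
  rw [Polynomial.nthRootsFinset_def]

lemma rootMeasure_zero : rootMeasure 0 = 0 := by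
  simp [rootMeasure, Polynomial.nthRoots_zero]

lemma rootMeasure_apply (i : ℕ) (A : Set ℂ) (hA : MeasurableSet A) :
    rootMeasure i A
      = (i : ENNReal)⁻¹ * ∑ ζ ∈ Polynomial.nthRootsFinset i (1 : ℂ), A.indicator 1 ζ := by
  rw [rootMeasure, rootFinset_eq, Measure.smul_apply, Measure.finset_sum_apply]
  simp only [smul_eq_mul]
  congr 1
  refine Finset.sum_congr rfl fun ζ _ => ?_
  rw [Measure.dirac_apply' _ hA]

lemma rootMeasure_singleton (i : ℕ) (hi : 0 < i) (q : ℂ) :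
    rootMeasure i {q} = if q ^ i = 1 then (i : ENNReal)⁻¹ else 0 := by
  classical
  rw [rootMeasure_apply i _ (measurableSet_singleton q)]
  have h1 : ∑ ζ ∈ Polynomial.nthRootsFinset i (1 : ℂ), (Set.indicator {q} (1 : ℂ → ENNReal)) ζ
      = if q ∈ Polynomial.nthRootsFinset i (1 : ℂ) then 1 else 0 := by
    simp only [Set.indicator_apply, Set.mem_singleton_iff, Pi.one_apply]
    rw [Finset.sum_ite_eq' (Polynomial.nthRootsFinset i (1 : ℂ)) q (fun _ => (1 : ENNReal))]
  rw [h1]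
  simp only [Polynomial.mem_nthRootsFinset hi]
  split <;> simp

lemma rootMeasure_univ (i : ℕ) (hi : 0 < i) : rootMeasure i Set.univ = 1 := by
  rw [rootMeasure_apply i _ MeasurableSet.univ]
  have := (Complex.isPrimitiveRoot_exp i hi.ne').card_nthRootsFinset
  simp [Set.indicator_univ, this, ENNReal.inv_mul_cancel, hi.ne',
    (by exact_mod_cast hi.ne' : (i:ENNReal) ≠ 0)]

def rootsSet : Set ℂ := {z | ∃ i : ℕ, 0 < i ∧ z ^ i = 1}

lemma rootsSet_countable : rootsSet.Countable := by
  have hsub : rootsSet ⊆ ⋃ i : ℕ, (Polynomial.nthRootsFinset i (1 : ℂ) : Set ℂ) := by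
    rintro z ⟨i, hi, hz⟩
    exact Set.mem_iUnion.2 ⟨i, by simpa [Polynomial.mem_nthRootsFinset hi] using hz⟩
  exact (Set.countable_iUnion fun i => (Polynomial.nthRootsFinset i (1 : ℂ)).countable_toSet).mono hsub

lemma rootsSet_measurable : MeasurableSet rootsSet :=
  rootsSet_countable.measurableSet

lemma rootMeasure_compl (i : ℕ) : rootMeasure i rootsSetᶜ = 0 := by
  rcases Nat.eq_zero_or_pos i with h | h
  · simp [h, rootMeasure_zero]
  rw [rootMeasure_apply i _ rootsSet_measurable.compl]
  have : ∀ ζ ∈ Polynomial.nthRootsFinset i (1 : ℂ), (rootsSetᶜ).indicator (1 : ℂ → ENNReal) ζ = 0 := by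
    intro ζ hζ
    have : ζ ∈ rootsSet := ⟨i, h, (Polynomial.mem_nthRootsFinset h (1 : ℂ)).1 hζ⟩
    simp [Set.indicator_apply, this]
  rw [Finset.sum_congr rfl this]
  simp


/-- `λ_∞`, the normalized Haar (Lebesgue) probability measure on the unit circle `S¹ ⊆ ℂ`,
realized as the pushforward of normalized Lebesgue measure on `[0, 2π)` under
`θ ↦ exp(iθ)`. -/
noncomputable def haarCircleMeasure : Measure ℂ :=
  Measure.map (fun θ : ℝ => Complex.exp (θ * Complex.I))
    ((ENNReal.ofReal (2 * Real.pi))⁻¹ • volume.restrict (Set.Ico 0 (2 * Real.pi)))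

lemma circleMap_measurable : Measurable (fun θ : ℝ => Complex.exp (θ * Complex.I)) := by
  fun_prop

lemma haarCircleMeasure_apply (S : Set ℂ) (hS : MeasurableSet S) :
    haarCircleMeasure S = (ENNReal.ofReal (2 * Real.pi))⁻¹ *
      volume ((fun θ : ℝ => Complex.exp (θ * Complex.I)) ⁻¹' S ∩ Set.Ico 0 (2 * Real.pi)) := by
  rw [haarCircleMeasure, Measure.map_apply circleMap_measurable hS, Measure.smul_apply,
    Measure.restrict_apply (circleMap_measurable hS)]
  simp [smul_eq_mul]

lemma haarCircleMeasure_countable (S : Set ℂ) (hS : MeasurableSet S) (hc : S.Countable) :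
    haarCircleMeasure S = 0 := by
  rw [haarCircleMeasure_apply S hS]
  have hnull : volume ((fun θ : ℝ => Complex.exp (θ * Complex.I)) ⁻¹' S
      ∩ Set.Ico 0 (2 * Real.pi)) = 0 := by
    have hcnt : ((fun θ : ℝ => Complex.exp (θ * Complex.I)) ⁻¹' S
        ∩ Set.Ico 0 (2 * Real.pi)).Countable := by
      have : (fun θ : ℝ => Complex.exp (θ * Complex.I)) ⁻¹' S ∩ Set.Ico 0 (2 * Real.pi)
          = ⋃ z ∈ S, {θ : ℝ | Complex.exp (θ * Complex.I) = z} ∩ Set.Ico 0 (2 * Real.pi) := by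
        ext θ; simp [Set.mem_iUnion]; tauto
      rw [this]
      refine hc.biUnion fun z _ => Set.Subsingleton.countable ?_
      rintro θ₁ ⟨h₁, hI₁⟩ θ₂ ⟨h₂, hI₂⟩
      have hexp : Complex.exp ((θ₁ - θ₂ : ℝ) * Complex.I) = 1 := by
        push_cast
        rw [sub_mul, Complex.exp_sub, h₁, ← h₂]
        exact div_self (Complex.exp_ne_zero _)
      rcases Complex.exp_eq_one_iff.1 hexp with ⟨n, hn⟩
      have hn' : (θ₁ - θ₂ : ℝ) = n * (2 * Real.pi) := by
        have h2 : ((θ₁ - θ₂ : ℝ) : ℂ) * Complex.I = ((n : ℝ) * (2 * Real.pi) : ℝ) * Complex.I := by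
          rw [hn]; push_cast; ring
        have := mul_right_cancel₀ Complex.I_ne_zero h2
        exact_mod_cast this
      have hb : |(θ₁ - θ₂ : ℝ)| < 2 * Real.pi := by
        rw [abs_sub_lt_iff]
        constructor <;> nlinarith [hI₁.1, hI₁.2, hI₂.1, hI₂.2]
      have : n = 0 := by
        by_contra h
        have h1 : (1 : ℝ) ≤ |(n : ℝ)| := by
          exact_mod_cast Int.one_le_abs (by exact_mod_cast h)
        rw [hn', abs_mul, abs_of_pos (by positivity : (0:ℝ) < 2 * Real.pi)] at hb
        nlinarith [Real.pi_pos]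
      simp [this] at hn'
      linarith
    exact hcnt.measure_zero _
  rw [hnull, mul_zero]

lemma haarCircleMeasure_univ : haarCircleMeasure Set.univ = 1 := by
  rw [haarCircleMeasure_apply _ MeasurableSet.univ]
  simp only [Set.preimage_univ, Set.univ_inter, Real.volume_Ico, sub_zero]
  exact ENNReal.inv_mul_cancel
    (by simp only [ne_eq, ENNReal.ofReal_eq_zero, not_le]; positivity) ENNReal.ofReal_ne_top

lemma measure_eq_tsum_of_countable (ν : Measure ℂ) {s : Set ℂ} (hs : s.Countable) :
    ν s = ∑' q : s, ν {(q : ℂ)} := by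
  conv_lhs => rw [← Set.biUnion_of_singleton s]
  rw [measure_biUnion hs ?_ fun b _ => measurableSet_singleton b]
  intro x _ y _ hxy
  simp [Function.onFun, Set.disjoint_singleton, hxy]

lemma ultrafilter_tsum_limit (U : Ultrafilter ℕ) (s : ℕ → ℕ → NNReal) (c : ℕ → NNReal)
    (a : ℕ → ENNReal)
    (hs1 : ∀ j, ∑' i, (s j i : ENNReal) ≤ 1)
    (hc : ∀ i, Tendsto (fun j => s j i) ↑U (nhds (c i)))
    (ha : ∀ i, a i ≤ (i : ENNReal)⁻¹) (ha' : ∀ i, a i ≠ ⊤)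
    (L : ENNReal)
    (hL : Tendsto (fun j => ∑' i, (s j i : ENNReal) * a i) ↑U (nhds L)) :
    L = ∑' i, (c i : ENNReal) * a i := by
  have hfin : ∀ M : ℕ, Tendsto (fun j => ∑ i ∈ Finset.range M, (s j i : ENNReal) * a i) ↑U
      (nhds (∑ i ∈ Finset.range M, (c i : ENNReal) * a i)) := by
    intro M
    exact tendsto_finset_sum _ fun i _ =>
      ENNReal.Tendsto.mul_const (ENNReal.tendsto_coe.2 (hc i)) (Or.inr (ha' i))
  have hlower : ∑' i, (c i : ENNReal) * a i ≤ L := by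
    refine ENNReal.tsum_le_of_sum_range_le fun M => ?_
    exact le_of_tendsto_of_tendsto' (hfin M) hL fun j => ENNReal.sum_le_tsum _
  have hupper : L ≤ ∑' i, (c i : ENNReal) * a i := by
    refine ENNReal.le_of_forall_pos_le_add fun ε hε _ => ?_
    obtain ⟨M, hM⟩ := ENNReal.exists_inv_nat_lt (by exact_mod_cast hε.ne' : ((ε : ENNReal)) ≠ 0)
    have htail : ∀ j, ∑' i, (s j i : ENNReal) * a i ≤
        (∑ i ∈ Finset.range M, (s j i : ENNReal) * a i) + ε := by
      intro j
      have hsplit := Summable.sum_add_tsum_nat_add' (f := fun i => (s j i : ENNReal) * a i) (k := M)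
        ENNReal.summable
      have hsub : ∑' i, (s j (i + M) : ENNReal) ≤ 1 :=
        le_trans (le_add_self.trans_eq
          (Summable.sum_add_tsum_nat_add' (f := fun i => (s j i : ENNReal)) (k := M) ENNReal.summable))
          (hs1 j)
      have htail1 : ∑' i, (s j (i + M) : ENNReal) * a (i + M) ≤ (M : ENNReal)⁻¹ := by
        calc ∑' i, (s j (i + M) : ENNReal) * a (i + M)
            ≤ ∑' i, (s j (i + M) : ENNReal) * (M : ENNReal)⁻¹ := by
              refine ENNReal.tsum_le_tsum fun i => mul_le_mul_right ?_ _
              exact (ha _).trans (ENNReal.inv_le_inv' (by exact_mod_cast Nat.le_add_left M i))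
          _ = (∑' i, (s j (i + M) : ENNReal)) * (M : ENNReal)⁻¹ := ENNReal.tsum_mul_right
          _ ≤ 1 * (M : ENNReal)⁻¹ := mul_le_mul_left hsub _
          _ = (M : ENNReal)⁻¹ := one_mul _
      calc ∑' i, (s j i : ENNReal) * a i
          = (∑ i ∈ Finset.range M, (s j i : ENNReal) * a i)
            + ∑' i, (s j (i + M) : ENNReal) * a (i + M) := hsplit.symm
        _ ≤ (∑ i ∈ Finset.range M, (s j i : ENNReal) * a i) + ε :=
            add_le_add_right (htail1.trans hM.le) _
    have h2 : L ≤ (∑ i ∈ Finset.range M, (c i : ENNReal) * a i) + ε :=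
      le_of_tendsto_of_tendsto' hL ((hfin M).add tendsto_const_nhds) htail
    exact h2.trans (add_le_add_left (ENNReal.sum_le_tsum _) _)
  exact le_antisymm hupper hlower


/-- If a Borel probability measure `μ` on the unit circle is the setwise
limit of a sequence of finite convex combinations of the measures
`{λᵢ : i ∈ ℕ*} ∪ {λ_∞}`, then `μ` itself is a (countable) convex combination
`μ = c_∞ λ_∞ + ∑_{i ∈ ℕ*} cᵢ λᵢ` with nonnegative coefficients summing to `1`. -/
theorem setwise_limit_of_convex_combinations (μseq : ℕ → Measure ℂ)
    (hconv : ∀ j, ∃ (t : ℕ → NNReal) (tinf : NNReal) (N : ℕ),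
      t 0 = 0 ∧
      tinf + ∑ i ∈ Finset.range (N + 1), t i = 1 ∧
      μseq j = tinf • haarCircleMeasure +
        ∑ i ∈ Finset.range (N + 1), t i • rootMeasure i)
    (μ : Measure ℂ) [IsProbabilityMeasure μ]
    (hlim : ∀ A : Set ℂ, MeasurableSet A →
      Tendsto (fun j => μseq j A) atTop (nhds (μ A))) :
    ∃ (c : ℕ → NNReal) (cinf s : NNReal),
      c 0 = 0 ∧ HasSum c s ∧ cinf + s = 1 ∧
      μ = cinf • haarCircleMeasure + Measure.sum (fun i => c i • rootMeasure i) := by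
  classical
  choose t tinf N h0 hsum heq using hconv
  set sfun : ℕ → ℕ → NNReal := fun j i => if i ∈ Finset.range (N j + 1) then t j i else 0
    with hsfun
  have hpos : ∀ j i, i ∈ Finset.range (N j + 1) → sfun j i = t j i := fun j i hi => if_pos hi
  have hneg : ∀ j i, i ∉ Finset.range (N j + 1) → sfun j i = 0 := fun j i hi => if_neg hi
  -- evaluation of μseq on measurable sets
  have hseval : ∀ j (A : Set ℂ), MeasurableSet A →
      μseq j A = (tinf j : ENNReal) * haarCircleMeasure A
        + ∑' i, (sfun j i : ENNReal) * rootMeasure i A := by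
    intro j A hA
    rw [heq j]
    simp only [Measure.add_apply, Measure.smul_apply, Measure.finset_sum_apply,
      ENNReal.smul_def, smul_eq_mul]
    congr 1
    have hts : ∑' i, (sfun j i : ENNReal) * rootMeasure i A
        = ∑ i ∈ Finset.range (N j + 1), (t j i : ENNReal) * rootMeasure i A := by
      rw [tsum_eq_sum (s := Finset.range (N j + 1))
        (fun i hi => by rw [hneg j i hi]; simp)]
      exact Finset.sum_congr rfl fun i hi => by rw [hpos j i hi]
    rw [hts]
  -- tsum of coefficients
  have hsum' : ∀ j, (tinf j : ENNReal) + ∑' i, (sfun j i : ENNReal) = 1 := by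
    intro j
    have hts : ∑' i, ((sfun j i : ENNReal))
        = ∑ i ∈ Finset.range (N j + 1), ((t j i : ENNReal)) := by
      rw [tsum_eq_sum (s := Finset.range (N j + 1))
        (fun i hi => by rw [hneg j i hi]; simp)]
      exact Finset.sum_congr rfl fun i hi => by rw [hpos j i hi]
    rw [hts, ← ENNReal.coe_finset_sum, ← ENNReal.coe_add, hsum j, ENNReal.coe_one]
  have hs1 : ∀ j, ∑' i, (sfun j i : ENNReal) ≤ 1 := fun j =>
    le_add_self.trans_eq (hsum' j)
  have hsle1 : ∀ j i, sfun j i ≤ 1 := by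
    intro j i
    by_cases hi : i ∈ Finset.range (N j + 1)
    · have h1 : t j i ≤ ∑ k ∈ Finset.range (N j + 1), t j k :=
        Finset.single_le_sum (fun _ _ => zero_le) hi
      have h2 : (∑ k ∈ Finset.range (N j + 1), t j k) ≤ 1 :=
        le_add_self.trans_eq (hsum j)
      rw [hpos j i hi]; exact h1.trans h2
    · rw [hneg j i hi]; exact zero_le
  -- Haar measure of rootsSetᶜ
  have hhaarQ : haarCircleMeasure rootsSet = 0 :=
    haarCircleMeasure_countable rootsSet rootsSet_measurable rootsSet_countable
  have hhaarQc : haarCircleMeasure rootsSetᶜ = 1 := by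
    have := measure_add_measure_compl (μ := haarCircleMeasure) rootsSet_measurable
    rw [hhaarQ, zero_add, haarCircleMeasure_univ] at this
    exact this
  have hhaar_ne_top : ∀ A : Set ℂ, haarCircleMeasure A ≠ ⊤ := by
    intro A
    exact (((measure_mono (Set.subset_univ A)).trans_eq haarCircleMeasure_univ).trans_lt
      ENNReal.one_lt_top).ne
  -- tinf converges to μ rootsSetᶜ
  have htinf : Tendsto (fun j => (tinf j : ENNReal)) atTop (nhds (μ rootsSetᶜ)) := by
    have h1 := hlim rootsSetᶜ rootsSet_measurable.compl
    have h2 : ∀ j, μseq j rootsSetᶜ = (tinf j : ENNReal) := by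
      intro j
      rw [hseval j rootsSetᶜ rootsSet_measurable.compl, hhaarQc, mul_one]
      simp [rootMeasure_compl]
    simpa [h2] using h1
  -- continuous part
  have hcont : ∀ A : Set ℂ, MeasurableSet A → μ (A \ rootsSet) = μ rootsSetᶜ * haarCircleMeasure A := by
    intro A hA
    have hAQ : MeasurableSet (A \ rootsSet) := hA.diff rootsSet_measurable
    have hhaardiff : haarCircleMeasure (A \ rootsSet) = haarCircleMeasure A := by
      have h1 := measure_inter_add_diff (μ := haarCircleMeasure) A rootsSet_measurable
      have h2 : haarCircleMeasure (A ∩ rootsSet) = 0 :=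
        measure_mono_null Set.inter_subset_right hhaarQ
      rw [h2, zero_add] at h1
      exact h1
    have h2 : ∀ j, μseq j (A \ rootsSet) = (tinf j : ENNReal) * haarCircleMeasure A := by
      intro j
      rw [hseval j _ hAQ, hhaardiff]
      have h3 : ∀ i : ℕ, rootMeasure i (A \ rootsSet) = 0 := fun i =>
        measure_mono_null (fun x hx => hx.2) (rootMeasure_compl i)
      simp [h3]
    have h4 : Tendsto (fun j => (tinf j : ENNReal) * haarCircleMeasure A) atTop
        (nhds (μ rootsSetᶜ * haarCircleMeasure A)) :=
      ENNReal.Tendsto.mul_const htinf (Or.inr (hhaar_ne_top A))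
    exact tendsto_nhds_unique (by simpa [h2] using hlim _ hAQ) h4
  -- ultrafilter limits of coefficients
  let U : Ultrafilter ℕ := Ultrafilter.of atTop
  have hU : (U : Filter ℕ) ≤ atTop := Ultrafilter.of_le _
  have hcex : ∀ i, ∃ x : NNReal, Tendsto (fun j => sfun j i) ↑U (nhds x) := by
    intro i
    have hmem : ∀ j, sfun j i ∈ Set.Icc (0 : NNReal) 1 := fun j => ⟨zero_le, hsle1 j i⟩
    obtain ⟨x, -, hx⟩ := isCompact_Icc.ultrafilter_le_nhds (U.map fun j => sfun j i)
      (le_principal_iff.2 (Filter.mem_map.2 (Filter.univ_mem' hmem)))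
    exact ⟨x, by rwa [Ultrafilter.coe_map] at hx⟩
  choose c hc using hcex
  have hc0 : c 0 = 0 := by
    have heq0 : (fun j => sfun j 0) = fun _ => (0 : NNReal) := by
      funext j
      rw [hpos j 0 (Finset.mem_range.2 (Nat.succ_pos _)), h0 j]
    have := hc 0
    rw [heq0] at this
    exact tendsto_nhds_unique this tendsto_const_nhds
  -- atoms
  have hatom : ∀ q ∈ rootsSet, μ {q} = ∑' i, (c i : ENNReal) * rootMeasure i {q} := by
    intro q hq
    set a : ℕ → ENNReal := fun i => rootMeasure i {q} with hadef
    have ha : ∀ i, a i ≤ (i : ENNReal)⁻¹ := by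
      intro i
      rcases Nat.eq_zero_or_pos i with h | h
      · simp [hadef, h, rootMeasure_zero]
      · rw [hadef]; simp only; rw [rootMeasure_singleton i h q]
        split <;> simp
    have ha' : ∀ i, a i ≠ ⊤ := by
      intro i
      rcases Nat.eq_zero_or_pos i with h | h
      · simp [hadef, h, rootMeasure_zero]
      · refine ((ha i).trans_lt ?_).ne
        have h1 : (1 : ENNReal) ≤ (i : ENNReal) := by exact_mod_cast h
        exact (ENNReal.inv_le_one.2 h1).trans_lt ENNReal.one_lt_top
    have hL : Tendsto (fun j => ∑' i, (sfun j i : ENNReal) * a i) ↑U (nhds (μ {q})) := by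
      have h1 := (hlim {q} (measurableSet_singleton q)).mono_left hU
      have h2 : ∀ j, μseq j {q} = ∑' i, (sfun j i : ENNReal) * a i := by
        intro j
        rw [hseval j _ (measurableSet_singleton q),
          haarCircleMeasure_countable _ (measurableSet_singleton q) (Set.countable_singleton q)]
        simp [hadef]
      simpa [h2] using h1
    exact ultrafilter_tsum_limit U sfun c a hs1 hc ha ha' _ hL
  -- atomic part
  have hatomic : ∀ A : Set ℂ, MeasurableSet A →
      μ (A ∩ rootsSet) = ∑' i, (c i : ENNReal) * rootMeasure i (A ∩ rootsSet) := by
    intro A hA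
    have hAQc : (A ∩ rootsSet).Countable := rootsSet_countable.mono Set.inter_subset_right
    rw [measure_eq_tsum_of_countable μ hAQc]
    have h1 : ∀ p : ↥(A ∩ rootsSet), μ {(p : ℂ)} = ∑' i, (c i : ENNReal) * rootMeasure i {(p : ℂ)} :=
      fun p => hatom p p.2.2
    rw [tsum_congr h1, ENNReal.tsum_comm]
    refine tsum_congr fun i => ?_
    rw [ENNReal.tsum_mul_left, ← measure_eq_tsum_of_countable (rootMeasure i) hAQc]
  have hrmA : ∀ (i : ℕ) (A : Set ℂ), rootMeasure i (A ∩ rootsSet) = rootMeasure i A := by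
    intro i A
    have h1 := measure_inter_add_diff (μ := rootMeasure i) A rootsSet_measurable
    have h2 : rootMeasure i (A \ rootsSet) = 0 :=
      measure_mono_null (fun x hx => hx.2) (rootMeasure_compl i)
    rw [h2, add_zero] at h1
    exact h1
  -- total mass of the atomic part
  have hQ1 : μ rootsSet = ∑' i, (c i : ENNReal) := by
    have h1 := hatomic Set.univ MeasurableSet.univ
    rw [Set.univ_inter] at h1
    rw [h1]
    refine tsum_congr fun i => ?_
    rcases Nat.eq_zero_or_pos i with h | h
    · simp [h, hc0]
    · have h3 : rootMeasure i rootsSet = 1 := by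
        have h4 := hrmA i Set.univ
        rw [Set.univ_inter] at h4
        rw [h4, rootMeasure_univ i h]
      rw [h3, mul_one]
  have hsummable : Summable c :=
    ENNReal.tsum_coe_ne_top_iff_summable.1 (by rw [← hQ1]; exact measure_ne_top μ rootsSet)
  refine ⟨c, (μ rootsSetᶜ).toNNReal, ∑' i, c i, hc0, hsummable.hasSum, ?_, ?_⟩
  · have hcoe : ((μ rootsSetᶜ).toNNReal : ENNReal) = μ rootsSetᶜ := ENNReal.coe_toNNReal (measure_ne_top μ _)
    have h1 : μ rootsSet + μ rootsSetᶜ = 1 := by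
      rw [measure_add_measure_compl rootsSet_measurable, measure_univ]
    refine ENNReal.coe_injective ?_
    rw [ENNReal.coe_add, hcoe, ENNReal.coe_tsum hsummable, ← hQ1, ENNReal.coe_one, add_comm]
    exact h1
  · refine Measure.ext fun A hA => ?_
    have hsplit := measure_inter_add_diff (μ := μ) A rootsSet_measurable
    have hcoe : ((μ rootsSetᶜ).toNNReal : ENNReal) = μ rootsSetᶜ := ENNReal.coe_toNNReal (measure_ne_top μ _)
    rw [← hsplit, hatomic A hA, hcont A hA]
    rw [Measure.add_apply, Measure.smul_apply, Measure.sum_apply _ hA]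
    simp only [Measure.smul_apply, ENNReal.smul_def, smul_eq_mul]
    rw [hcoe, add_comm]
    congr 1
    refine tsum_congr fun i => ?_
    rw [hrmA i A]
end
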